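/- Let L and S be independent non-negative random variables with L \in RV_{-\beta}, S \in RV_{-\gamma}, 0 < \beta, \beta + 1 < \gamma, and suppose F_L has a positive, non-increasing density f_L on [x_0, \infty). Then (F_{L+S}(x) - F_L(x))/f_L(x) \to -E[S] as x \to \infty. -/

import Mathlib

open MeasureTheory ProbabilityTheory Filter Topology

/-- Tail probability function of a random variable. -/
noncomputable def tail {Ω : Type*} [MeasurableSpace Ω] (P : Measure Ω) (X : Ω → ℝ) (x : ℝ) : ℝ :=
  (P {ω | x < X ω}).toReal

/-- Distribution function of a random variable. -/
noncomputable def cdf' {Ω : Type*} [MeasurableSpace Ω] (P : Measure Ω) (X : Ω → ℝ) (x : ℝ) : ℝ :=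
  (P {ω | X ω ≤ x}).toReal

/-- Value at Risk: the α-quantile. -/
noncomputable def VaR {Ω : Type*} [MeasurableSpace Ω] (P : Measure Ω) (X : Ω → ℝ) (α : ℝ) : ℝ :=
  sInf {x : ℝ | α ≤ cdf' P X x}

/-- f is regularly varying (at infinity) with index k. -/
def RegVary (f : ℝ → ℝ) (k : ℝ) : Prop :=
  ∀ t : ℝ, 0 < t → Tendsto (fun x => f (t * x) / f x) atTop (𝓝 (t ^ k))


set_option linter.unusedSectionVars false

section Helpers

lemma exists_dyadic {M x : ℝ} (hM : 0 < M) (hx : M ≤ x) :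
    ∃ n : ℕ, 2 ^ n * M ≤ x ∧ x < 2 ^ (n + 1) * M := by
  classical
  have hex : ∃ n : ℕ, x < 2 ^ (n+1) * M := by
    obtain ⟨n, hn⟩ := pow_unbounded_of_one_lt (x / M) (by norm_num : (1:ℝ) < 2)
    rw [div_lt_iff₀ hM] at hn
    have h2 : (2:ℝ) ^ n ≤ 2 ^ (n+1) := pow_le_pow_right₀ (by norm_num) (Nat.le_succ n)
    exact ⟨n, lt_of_lt_of_le hn (by nlinarith)⟩
  refine ⟨Nat.find hex, ?_, Nat.find_spec hex⟩
  rcases Nat.eq_zero_or_pos (Nat.find hex) with h0 | hpos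
  · rw [h0]; simpa using hx
  · have := Nat.find_min hex (Nat.sub_lt hpos one_pos)
    push_neg at this
    have heq : Nat.find hex - 1 + 1 = Nat.find hex := Nat.succ_pred_eq_of_pos hpos
    rwa [heq] at this

lemma dyadic_up (f : ℝ → ℝ) (M p : ℝ) (hp : 0 < p) (hM : 0 < M) (hfM : 0 ≤ f M)
    (hanti : ∀ ⦃x y⦄, M ≤ x → x ≤ y → f y ≤ f x)
    (hstep : ∀ x, M ≤ x → f (2 * x) ≤ 2 ^ (-p) * f x) :
    ∀ x, M ≤ x → f x ≤ (f M * (2 * M) ^ p) * x ^ (-p) := by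
  have h2p : (0:ℝ) ≤ 2 ^ (-p) := Real.rpow_nonneg (by norm_num) _
  have key : ∀ n : ℕ, f (2 ^ n * M) ≤ (2 ^ (-p)) ^ n * f M := by
    intro n
    induction n with
    | zero => simp
    | succ n ih =>
      have h1 : M ≤ 2 ^ n * M := le_mul_of_one_le_left hM.le (one_le_pow₀ (by norm_num))
      calc f (2 ^ (n+1) * M) = f (2 * (2 ^ n * M)) := by ring_nf
        _ ≤ 2 ^ (-p) * f (2 ^ n * M) := hstep _ h1
        _ ≤ 2 ^ (-p) * ((2 ^ (-p)) ^ n * f M) := by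
            exact mul_le_mul_of_nonneg_left ih h2p
        _ = (2 ^ (-p)) ^ (n+1) * f M := by ring
  intro x hx
  obtain ⟨n, hn1, hn2⟩ := exists_dyadic hM hx
  have hMn : M ≤ 2 ^ n * M := le_mul_of_one_le_left hM.le (one_le_pow₀ (by norm_num))
  have h1 : f x ≤ (2 ^ (-p)) ^ n * f M := le_trans (hanti hMn hn1) (key n)
  -- (2^(-p))^n = ((2:ℝ)^n)^(-p)
  have hrw : ((2:ℝ) ^ (-p)) ^ n = ((2:ℝ) ^ n : ℝ) ^ (-p) := by
    rw [← Real.rpow_natCast ((2:ℝ) ^ (-p)) n, ← Real.rpow_natCast (2:ℝ) n,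
      ← Real.rpow_mul (by norm_num), ← Real.rpow_mul (by norm_num), mul_comm]
  have hxpos : 0 < x := lt_of_lt_of_le hM hx
  have hb : x / (2 * M) ≤ (2:ℝ) ^ n := by
    rw [div_le_iff₀ (by positivity)]
    have h := pow_succ (2:ℝ) n
    nlinarith [hn2]
  have hbpos : 0 < x / (2 * M) := by positivity
  have h2 : ((2:ℝ) ^ n : ℝ) ^ (-p) ≤ (x / (2 * M)) ^ (-p) := by
    exact Real.rpow_le_rpow_of_nonpos hbpos hb (by linarith)
  have hdiv : (x / (2*M)) ^ (-p) = (2*M) ^ p * x ^ (-p) := by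
    rw [Real.div_rpow hxpos.le (by positivity), Real.rpow_neg hxpos.le, Real.rpow_neg (by positivity : (0:ℝ) ≤ 2*M)]
    field_simp
  calc f x ≤ (2 ^ (-p)) ^ n * f M := h1
    _ = ((2:ℝ) ^ n : ℝ) ^ (-p) * f M := by rw [hrw]
    _ ≤ (x / (2*M)) ^ (-p) * f M := mul_le_mul_of_nonneg_right h2 hfM
    _ = (f M * (2 * M) ^ p) * x ^ (-p) := by rw [hdiv]; ring

lemma dyadic_down (f : ℝ → ℝ) (M q : ℝ) (hq : 0 < q) (hM : 0 < M) (hfM : 0 ≤ f M)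
    (hanti : ∀ ⦃x y⦄, M ≤ x → x ≤ y → f y ≤ f x)
    (hstep : ∀ x, M ≤ x → 2 ^ (-q) * f x ≤ f (2 * x)) :
    ∀ x, M ≤ x → (f M * (2 / M) ^ (-q)) * x ^ (-q) ≤ f x := by
  have h2q : (0:ℝ) ≤ 2 ^ (-q) := Real.rpow_nonneg (by norm_num) _
  have key : ∀ n : ℕ, (2 ^ (-q)) ^ n * f M ≤ f (2 ^ n * M) := by
    intro n
    induction n with
    | zero => simp
    | succ n ih =>
      have h1 : M ≤ 2 ^ n * M := le_mul_of_one_le_left hM.le (one_le_pow₀ (by norm_num))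
      calc (2 ^ (-q)) ^ (n+1) * f M = 2 ^ (-q) * ((2 ^ (-q)) ^ n * f M) := by ring
        _ ≤ 2 ^ (-q) * f (2 ^ n * M) := mul_le_mul_of_nonneg_left ih h2q
        _ ≤ f (2 * (2 ^ n * M)) := hstep _ h1
        _ = f (2 ^ (n+1) * M) := by ring_nf
  intro x hx
  obtain ⟨n, hn1, hn2⟩ := exists_dyadic hM hx
  have hxpos : 0 < x := lt_of_lt_of_le hM hx
  have h1 : (2 ^ (-q)) ^ (n+1) * f M ≤ f x := by
    exact le_trans (key (n+1)) (hanti hx hn2.le)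
  have hrw : ((2:ℝ) ^ (-q)) ^ (n+1) = ((2:ℝ) ^ (n+1) : ℝ) ^ (-q) := by
    rw [← Real.rpow_natCast ((2:ℝ) ^ (-q)) (n+1), ← Real.rpow_natCast (2:ℝ) (n+1),
      ← Real.rpow_mul (by norm_num), ← Real.rpow_mul (by norm_num), mul_comm]
  have hb : (2:ℝ) ^ (n+1) ≤ 2 * x / M := by
    rw [le_div_iff₀ hM]
    have h := pow_succ (2:ℝ) n
    nlinarith [hn1]
  have h2 : ((2:ℝ) * x / M) ^ (-q) ≤ ((2:ℝ) ^ (n+1) : ℝ) ^ (-q) :=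
    Real.rpow_le_rpow_of_nonpos (by positivity) hb (by linarith)
  have hdiv : ((2:ℝ) * x / M) ^ (-q) = (2 / M) ^ (-q) * x ^ (-q) := by
    rw [show (2:ℝ) * x / M = (2 / M) * x by ring, Real.mul_rpow (by positivity) hxpos.le]
  calc (f M * (2 / M) ^ (-q)) * x ^ (-q) = ((2:ℝ)*x/M) ^ (-q) * f M := by rw [hdiv]; ring
    _ ≤ ((2:ℝ) ^ (n+1) : ℝ) ^ (-q) * f M := mul_le_mul_of_nonneg_right h2 hfM
    _ = (2 ^ (-q)) ^ (n+1) * f M := by rw [hrw]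
    _ ≤ f x := h1



lemma RegVary.eventually_pos {f : ℝ → ℝ} {k : ℝ} (hf : RegVary f k)
    (h0 : ∀ x, 0 ≤ f x) : ∀ᶠ x in atTop, 0 < f x := by
  have h := hf 1 one_pos
  simp only [one_mul, Real.one_rpow] at h
  have h2 : ∀ᶠ x in atTop, (1:ℝ)/2 < f x / f x :=
    h.eventually (eventually_gt_nhds (by norm_num))
  filter_upwards [h2] with x hx
  rcases eq_or_lt_of_le (h0 x) with he | hp
  · rw [← he] at hx; norm_num at hx
  · exact hp

lemma rv_upper {f : ℝ → ℝ} {k : ℝ} (hf : RegVary f (-k))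
    (h0 : ∀ x, 0 ≤ f x) (hanti : Antitone f) {p : ℝ} (hp : 0 < p) (hpk : p < k) :
    ∃ C : ℝ, 0 < C ∧ ∀ᶠ x in atTop, f x ≤ C * x ^ (-p) := by
  have h2 := hf 2 two_pos
  have hlt : (2:ℝ) ^ (-k) < 2 ^ (-p) :=
    Real.rpow_lt_rpow_of_exponent_lt (by norm_num) (by linarith)
  have hev : ∀ᶠ x in atTop, f (2 * x) / f x < 2 ^ (-p) :=
    h2.eventually (eventually_lt_nhds hlt)
  obtain ⟨M, hM⟩ := ((hev.and (hf.eventually_pos h0)).and (eventually_ge_atTop 1)).exists_forall_of_atTop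
  have hM1 : (1:ℝ) ≤ M ∨ True := Or.inr trivial
  -- pick M' := max M 1
  set M' := max M 1 with hM'
  have hM'pos : (0:ℝ) < M' := lt_of_lt_of_le one_pos (le_max_right _ _)
  have hstep : ∀ x, M' ≤ x → f (2 * x) ≤ 2 ^ (-p) * f x := by
    intro x hx
    obtain ⟨⟨hr, hpos⟩, -⟩ := hM x (le_trans (le_max_left _ _) hx)
    rw [div_lt_iff₀ hpos] at hr
    linarith
  have hfM'pos : 0 < f M' := (hM M' (le_max_left _ _)).1.2
  have := dyadic_up f M' p hp hM'pos (h0 M') (fun x y hx hxy => hanti hxy) hstep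
  refine ⟨f M' * (2 * M') ^ p, by positivity, ?_⟩
  filter_upwards [eventually_ge_atTop M'] with x hx using this x hx

lemma rv_lower {f : ℝ → ℝ} {k : ℝ} (hf : RegVary f (-k)) (hk : 0 < k)
    (h0 : ∀ x, 0 ≤ f x) (hanti : Antitone f) {q : ℝ} (hq : k < q) :
    ∃ c : ℝ, 0 < c ∧ ∀ᶠ x in atTop, c * x ^ (-q) ≤ f x := by
  have h2 := hf 2 two_pos
  have hlt : (2:ℝ) ^ (-q) < 2 ^ (-k) :=
    Real.rpow_lt_rpow_of_exponent_lt (by norm_num) (by linarith)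
  have hev : ∀ᶠ x in atTop, 2 ^ (-q) < f (2 * x) / f x :=
    h2.eventually (eventually_gt_nhds hlt)
  obtain ⟨M, hM⟩ := (hev.and (hf.eventually_pos h0)).exists_forall_of_atTop
  set M' := max M 1 with hM'
  have hM'pos : (0:ℝ) < M' := lt_of_lt_of_le one_pos (le_max_right _ _)
  have hstep : ∀ x, M' ≤ x → 2 ^ (-q) * f x ≤ f (2 * x) := by
    intro x hx
    obtain ⟨hr, hpos⟩ := hM x (le_trans (le_max_left _ _) hx)
    rw [lt_div_iff₀ hpos] at hr
    exact hr.le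
  have := dyadic_down f M' q (lt_trans hk hq) hM'pos (h0 M') (fun x y hx hxy => hanti hxy) hstep
  refine ⟨f M' * (2 / M') ^ (-q), ?_, ?_⟩
  · have : 0 < f M' := (hM M' (le_max_left _ _)).2
    positivity
  · filter_upwards [eventually_ge_atTop M'] with x hx using this x hx


lemma ddd (N D ε : ℝ) (hε : ε ≠ 0) : (N/ε)/(D/ε) = N/D := by
  rcases eq_or_ne D 0 with h|h
  · simp [h]
  · field_simp

lemma tendsto_Rlim {β : ℝ} (hβ : 0 < β) :
    Tendsto (fun ε : ℝ => ((1 - 2*ε) ^ (-β) - (1 - ε) ^ (-β)) / (1 - (1 + ε) ^ (-β)))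
      (𝓝[>] (0:ℝ)) (𝓝 1) := by
  set φ : ℝ → ℝ := fun u => (1 - u) ^ (-β) with hφ
  set ψ : ℝ → ℝ := fun u => (1 + u) ^ (-β) with hψ
  have hφ0 : φ 0 = 1 := by simp [hφ, Real.one_rpow]
  have hψ0 : ψ 0 = 1 := by simp [hψ, Real.one_rpow]
  have hdφ : HasDerivAt φ β 0 := by
    have h1 : HasDerivAt (fun u : ℝ => 1 - u) (-1) 0 := (hasDerivAt_id 0).const_sub 1
    have h2 : HasDerivAt (fun x : ℝ => x ^ (-β)) ((-β) * (1:ℝ) ^ (-β - 1)) 1 :=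
      Real.hasDerivAt_rpow_const (Or.inl one_ne_zero)
    have h3 := HasDerivAt.comp 0 (by simpa using h2) h1
    simp at h3; exact h3
  have hdψ : HasDerivAt ψ (-β) 0 := by
    have h1 : HasDerivAt (fun u : ℝ => 1 + u) 1 0 := (hasDerivAt_id 0).const_add 1
    have h2 : HasDerivAt (fun x : ℝ => x ^ (-β)) ((-β) * (1:ℝ) ^ (-β - 1)) 1 :=
      Real.hasDerivAt_rpow_const (Or.inl one_ne_zero)
    have h3 := HasDerivAt.comp 0 (by simpa using h2) h1
    simp at h3; exact h3
  have hsub : 𝓝[>] (0:ℝ) ≤ 𝓝[≠] (0:ℝ) :=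
    nhdsWithin_mono 0 fun x hx => ne_of_gt hx
  have hslopeφ : Tendsto (fun ε : ℝ => (φ ε - 1) / ε) (𝓝[≠] 0) (𝓝 β) := by
    have h := hasDerivAt_iff_tendsto_slope.1 hdφ
    refine h.congr fun ε => ?_
    rw [slope_def_field, hφ0, sub_zero]
  have hslopeψ : Tendsto (fun ε : ℝ => (ψ ε - 1) / ε) (𝓝[≠] 0) (𝓝 (-β)) := by
    have h := hasDerivAt_iff_tendsto_slope.1 hdψ
    refine h.congr fun ε => ?_
    rw [slope_def_field, hψ0, sub_zero]
  have hmul2 : Tendsto (fun ε : ℝ => 2 * ε) (𝓝[≠] (0:ℝ)) (𝓝[≠] (0:ℝ)) := by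
    rw [tendsto_nhdsWithin_iff]
    constructor
    · have : Tendsto (fun ε : ℝ => 2 * ε) (𝓝 (0:ℝ)) (𝓝 (2 * 0)) :=
        (continuous_const.mul continuous_id).tendsto 0
      simpa using this.mono_left nhdsWithin_le_nhds
    · filter_upwards [self_mem_nhdsWithin] with ε (hε : ε ≠ 0)
      simpa using hε
  have hA : Tendsto (fun ε : ℝ => (φ (2*ε) - 1) / ε) (𝓝[≠] 0) (𝓝 (2*β)) := by
    have h := (hslopeφ.comp hmul2).const_mul (2:ℝ)
    refine h.congr' ?_
    filter_upwards [self_mem_nhdsWithin] with ε (hε : ε ≠ 0)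
    show 2 * ((φ (2*ε) - 1) / (2*ε)) = (φ (2*ε) - 1) / ε
    field_simp
  have hNum : Tendsto (fun ε : ℝ => (φ (2*ε) - φ ε) / ε) (𝓝[≠] 0) (𝓝 β) := by
    have h := hA.sub hslopeφ
    have h2 : (2*β - β) = β := by ring
    rw [h2] at h
    refine h.congr fun ε => ?_
    rw [div_sub_div_same]
    ring_nf
  have hDen : Tendsto (fun ε : ℝ => (1 - ψ ε) / ε) (𝓝[≠] 0) (𝓝 β) := by
    have h := hslopeψ.neg
    rw [neg_neg] at h
    refine h.congr fun ε => ?_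
    rw [← neg_div, neg_sub]
  have hfin : Tendsto (fun ε : ℝ => ((φ (2*ε) - φ ε) / ε) / ((1 - ψ ε) / ε)) (𝓝[≠] 0) (𝓝 1) := by
    have h := hNum.div hDen (ne_of_gt hβ)
    rwa [div_self (ne_of_gt hβ)] at h
  have hfin2 := hfin.mono_left hsub
  refine hfin2.congr' ?_
  filter_upwards [self_mem_nhdsWithin] with ε (hε : ε ∈ Set.Ioi (0:ℝ))
  rw [ddd _ _ _ (ne_of_gt hε)]

section Prob



variable {Ω : Type*} [MeasurableSpace Ω] (P : Measure Ω) [IsProbabilityMeasure P] (X : Ω → ℝ)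

lemma tail_nonneg (x : ℝ) : 0 ≤ tail P X x := ENNReal.toReal_nonneg

lemma tail_anti : Antitone (tail P X) := by
  intro x y hxy
  refine ENNReal.toReal_le_toReal (measure_ne_top _ _) (measure_ne_top _ _) |>.mpr ?_
  exact measure_mono fun ω (h : y < X ω) => lt_of_le_of_lt hxy h

lemma cdf'_mono : Monotone (cdf' P X) := by
  intro x y hxy
  refine ENNReal.toReal_le_toReal (measure_ne_top _ _) (measure_ne_top _ _) |>.mpr ?_
  exact measure_mono fun ω (h : X ω ≤ x) => le_trans h hxy

lemma cdf'_nonneg (x : ℝ) : 0 ≤ cdf' P X x := ENNReal.toReal_nonneg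

lemma cdf'_le_one (x : ℝ) : cdf' P X x ≤ 1 := by
  have := prob_le_one (μ := P) (s := {ω | X ω ≤ x})
  simpa [cdf'] using ENNReal.toReal_le_toReal (measure_ne_top _ _) (by simp) |>.mpr this

lemma cdf'_eq_one_sub_tail (hX : Measurable X) (x : ℝ) : cdf' P X x = 1 - tail P X x := by
  have hs : MeasurableSet {ω | X ω ≤ x} := hX measurableSet_Iic
  have hc : {ω | x < X ω} = {ω | X ω ≤ x}ᶜ := by ext ω; simp [not_le]
  have := prob_compl_eq_one_sub (μ := P) hs
  rw [cdf', tail, hc, this]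
  have h1 : P {ω | X ω ≤ x} ≤ 1 := prob_le_one
  rw [ENNReal.toReal_sub_of_le h1 (by simp)]
  simp

lemma measurable_cdf_map (hL : Measurable L) :
    Monotone (fun y : ℝ => (P.map L) (Set.Iic y)) :=
  fun a b hab => measure_mono (Set.Iic_subset_Iic.mpr hab)

lemma conv_repr {L S : Ω → ℝ} (hL : Measurable L) (hS : Measurable S)
    (hindep : IndepFun L S P) (x : ℝ) :
    cdf' P (fun ω => L ω + S ω) x = ∫ s, cdf' P L (x - s) ∂(P.map S) := by
  have hmap : Measure.map (fun ω => (S ω, L ω)) P = (P.map S).prod (P.map L) :=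
    (indepFun_iff_map_prod_eq_prod_map_map hS.aemeasurable hL.aemeasurable).mp hindep.symm
  have hA : MeasurableSet {p : ℝ × ℝ | p.2 + p.1 ≤ x} :=
    measurableSet_le (measurable_snd.add measurable_fst) measurable_const
  have h1 : P {ω | L ω + S ω ≤ x} = ((P.map S).prod (P.map L)) {p : ℝ × ℝ | p.2 + p.1 ≤ x} := by
    rw [← hmap, Measure.map_apply (hS.prodMk hL) hA]
    rfl
  have h2 : ((P.map S).prod (P.map L)) {p : ℝ × ℝ | p.2 + p.1 ≤ x}
      = ∫⁻ s, (P.map L) (Set.Iic (x - s)) ∂(P.map S) := by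
    rw [Measure.prod_apply hA]
    congr 1
    ext s
    congr 1
    ext l
    simp [Set.mem_Iic]
    constructor <;> intro h <;> linarith
  have hmL : ∀ y, (P.map L) (Set.Iic y) = P {ω | L ω ≤ y} := by
    intro y
    rw [Measure.map_apply hL measurableSet_Iic]
    rfl
  have hmeas : Measurable (fun s : ℝ => (P.map L) (Set.Iic (x - s))) := by
    have h3 : Monotone (fun y : ℝ => (P.map L) (Set.Iic y)) :=
      fun a b hab => measure_mono (Set.Iic_subset_Iic.mpr hab)
    exact h3.measurable.comp (measurable_const.sub measurable_id)
  have hfin : ∀ᵐ s ∂(P.map S), (P.map L) (Set.Iic (x - s)) < ⊤ :=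
    Filter.Eventually.of_forall fun s => lt_of_le_of_lt (measure_mono (Set.subset_univ _))
      (by rw [Measure.map_apply hL MeasurableSet.univ]; exact measure_lt_top _ _)
  have h4 := integral_toReal hmeas.aemeasurable hfin
  rw [cdf', h1, h2, ← h4]
  refine integral_congr_ae (Filter.Eventually.of_forall fun s => ?_)
  show ((P.map L) (Set.Iic (x - s))).toReal = cdf' P L (x - s)
  rw [hmL]
  rfl

lemma integrable_of_tail {S : Ω → ℝ} (hS : Measurable S) (hSpos : ∀ ω, 0 ≤ S ω)
    {C p M : ℝ} (hp : 1 < p) (hM : 0 < M)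
    (hbound : ∀ t, M ≤ t → tail P S t ≤ C * t ^ (-p)) : Integrable S P := by
  refine ⟨hS.aestronglyMeasurable, ?_⟩
  rw [hasFiniteIntegral_iff_norm]
  have hnorm : ∀ ω, ENNReal.ofReal ‖S ω‖ = ENNReal.ofReal (S ω) := fun ω => by
    rw [Real.norm_of_nonneg (hSpos ω)]
  simp_rw [hnorm]
  rw [lintegral_eq_lintegral_meas_lt P (Filter.Eventually.of_forall hSpos) hS.aemeasurable]
  have hsplit : Set.Ioc (0:ℝ) M ∪ Set.Ioi M = Set.Ioi 0 := Set.Ioc_union_Ioi_eq_Ioi hM.le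
  rw [← hsplit, lintegral_union measurableSet_Ioi Set.Ioc_disjoint_Ioi_same]
  have h1 : ∫⁻ t in Set.Ioc (0:ℝ) M, P {a | t < S a} ≤ ENNReal.ofReal M := by
    calc ∫⁻ t in Set.Ioc (0:ℝ) M, P {a | t < S a} ≤ ∫⁻ _ in Set.Ioc (0:ℝ) M, 1 :=
      lintegral_mono fun t => prob_le_one
    _ = ENNReal.ofReal M := by
      rw [setLIntegral_one]
      simp [Real.volume_Ioc]
  have h2 : ∫⁻ t in Set.Ioi M, P {a | t < S a} < ⊤ := by
    have hint : IntegrableOn (fun t : ℝ => C * t ^ (-p)) (Set.Ioi M) :=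
      (integrableOn_Ioi_rpow_of_lt (by linarith) hM).const_mul C
    have hb : ∀ t ∈ Set.Ioi M, P {a | t < S a} ≤ ENNReal.ofReal (C * t ^ (-p)) := by
      intro t ht
      have := hbound t (le_of_lt ht)
      rw [tail] at this
      calc P {a | t < S a} = ENNReal.ofReal ((P {a | t < S a}).toReal) :=
        (ENNReal.ofReal_toReal (measure_ne_top _ _)).symm
      _ ≤ ENNReal.ofReal (C * t ^ (-p)) := ENNReal.ofReal_le_ofReal this
    calc ∫⁻ t in Set.Ioi M, P {a | t < S a} ≤ ∫⁻ t in Set.Ioi M, ENNReal.ofReal (C * t ^ (-p)) :=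
      setLIntegral_mono_ae (by fun_prop) (Filter.Eventually.of_forall hb)
    _ ≤ ∫⁻ t in Set.Ioi M, ENNReal.ofReal ‖C * t ^ (-p)‖ :=
      lintegral_mono fun t => ENNReal.ofReal_le_ofReal (le_abs_self _)
    _ < ⊤ := by
      have := hint.2
      rwa [hasFiniteIntegral_iff_norm] at this
  exact ENNReal.add_lt_top.mpr ⟨lt_of_le_of_lt h1 (by simp), h2⟩

end Prob
end Helpers

set_option maxHeartbeats 1000000 in
theorem stmt13 {Ω : Type*} [MeasurableSpace Ω] (P : Measure Ω) [IsProbabilityMeasure P]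
    (L S : Ω → ℝ) (hL : Measurable L) (hS : Measurable S)
    (hindep : IndepFun L S P)
    (hLpos : ∀ ω, 0 ≤ L ω) (hSpos : ∀ ω, 0 ≤ S ω)
    (β γ : ℝ) (hβ : 0 < β) (hβγ : β + 1 < γ)
    (hRVL : RegVary (tail P L) (-β)) (hRVS : RegVary (tail P S) (-γ))
    (x₀ : ℝ) (hx₀ : 0 < x₀) (fL : ℝ → ℝ)
    (hfLpos : ∀ x, x₀ ≤ x → 0 < fL x)
    (hfLmono : ∀ x y, x₀ ≤ x → x ≤ y → fL y ≤ fL x)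
    (hfLdens : ∀ x, x₀ ≤ x → cdf' P L x = cdf' P L x₀ + ∫ y in x₀..x, fL y)
 :
    Tendsto (fun x => (cdf' P (fun ω => L ω + S ω) x - cdf' P L x) / fL x)
      atTop (𝓝 (-∫ ω, S ω ∂P)) := by
  -- Notation
  set T : ℝ → ℝ := tail P L with hT
  set TS : ℝ → ℝ := tail P S with hTS
  set G : ℝ → ℝ := cdf' P L with hG
  set ν : Measure ℝ := P.map S with hν
  have hνprob : IsProbabilityMeasure ν := Measure.isProbabilityMeasure_map hS.aemeasurable
  have hTanti : Antitone T := tail_anti P L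
  have hTSanti : Antitone TS := tail_anti P S
  have hT0 : ∀ x, 0 ≤ T x := tail_nonneg P L
  have hTS0 : ∀ x, 0 ≤ TS x := tail_nonneg P S
  have hGmono : Monotone G := cdf'_mono P L
  have hGT : ∀ x, G x = 1 - T x := cdf'_eq_one_sub_tail P L hL
  have hG0 : ∀ x, 0 ≤ G x := cdf'_nonneg P L
  have hG1 : ∀ x, G x ≤ 1 := cdf'_le_one P L
  -- interval integrability of the density
  have hint : ∀ a b : ℝ, x₀ ≤ a → a ≤ b → IntervalIntegrable fL volume a b := by
    intro a b ha hab
    apply AntitoneOn.intervalIntegrable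
    intro u hu v hv huv
    rw [Set.uIcc_of_le hab] at hu
    exact hfLmono u v (ha.trans hu.1) huv
  have hGdiff : ∀ a b : ℝ, x₀ ≤ a → a ≤ b → G b - G a = ∫ y in a..b, fL y := by
    intro a b ha hab
    have h1 := hfLdens b (ha.trans hab)
    have h2 := hfLdens a ha
    have h3 := intervalIntegral.integral_interval_sub_left
      (hint x₀ b le_rfl (ha.trans hab)) (hint x₀ a le_rfl ha)
    rw [h1, h2]
    rw [← h3]; ring
  have hwin_up : ∀ a b : ℝ, x₀ ≤ a → a ≤ b → G b - G a ≤ (b - a) * fL a := by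
    intro a b ha hab
    rw [hGdiff a b ha hab]
    have := intervalIntegral.integral_mono_on hab (hint a b ha hab)
      (intervalIntegrable_const (c := fL a)) (fun y hy => hfLmono a y ha hy.1)
    simpa [mul_comm] using this
  have hwin_lo : ∀ a b : ℝ, x₀ ≤ a → a ≤ b → (b - a) * fL b ≤ G b - G a := by
    intro a b ha hab
    rw [hGdiff a b ha hab]
    have := intervalIntegral.integral_mono_on hab
      (intervalIntegrable_const (c := fL b)) (hint a b ha hab)
      (fun y hy => hfLmono y b (ha.trans hy.1) hy.2)
    simpa [mul_comm] using this
  have hTdiff : ∀ a b : ℝ, G b - G a = T a - T b := by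
    intro a b; rw [hGT a, hGT b]; ring
  -- epsilon
  set ε : ℝ := (γ - β - 1)/4 with hεdef
  have hε : 0 < ε := by rw [hεdef]; linarith
  -- eventual positivity and power bounds for tails
  have hTpos : ∀ᶠ x in atTop, 0 < T x := hRVL.eventually_pos hT0
  obtain ⟨c, hc, hTlow⟩ : ∃ c : ℝ, 0 < c ∧ ∀ᶠ x in atTop, c * x ^ (-(β+ε)) ≤ T x :=
    rv_lower hRVL hβ hT0 hTanti (by linarith)
  obtain ⟨C, hC, hTSup⟩ : ∃ C : ℝ, 0 < C ∧ ∀ᶠ x in atTop, TS x ≤ C * x ^ (-(γ-ε)) :=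
    rv_upper hRVS hTS0 hTSanti (by linarith) (by linarith)
  -- lower bound for the density
  set δ' : ℝ := (1 - 2 ^ (-β))/2 with hδ'def
  have h2β : (2:ℝ) ^ (-β) < 1 := Real.rpow_lt_one_of_one_lt_of_neg one_lt_two (by linarith)
  have hδ' : 0 < δ' := by rw [hδ'def]; linarith
  have hfLlow : ∀ᶠ x in atTop, δ' * T x / x ≤ fL x := by
    have h2 := hRVL 2 two_pos
    have hev : ∀ᶠ x in atTop, T (2*x) / T x < 2 ^ (-β) + δ' :=
      h2.eventually (eventually_lt_nhds (by linarith))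
    filter_upwards [hev, hTpos, eventually_ge_atTop (max x₀ 1)] with x h1 h2x hx
    have hx₀x : x₀ ≤ x := le_trans (le_max_left _ _) hx
    have hx1 : (1:ℝ) ≤ x := le_trans (le_max_right _ _) hx
    have hxpos : (0:ℝ) < x := lt_of_lt_of_le one_pos hx1
    have hup := hwin_up x (2*x) hx₀x (by linarith)
    rw [hTdiff] at hup
    rw [div_lt_iff₀ h2x] at h1
    have hkey : δ' * T x ≤ T x - T (2*x) := by
      have : T (2*x) < (2 ^ (-β) + δ') * T x := h1
      have hδδ : (2 ^ (-β) + δ') = 1 - δ' := by rw [hδ'def]; ring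
      rw [hδδ] at this
      nlinarith [hT0 (2*x)]
    rw [div_le_iff₀ hxpos]
    calc δ' * T x ≤ T x - T (2*x) := hkey
      _ ≤ (2*x - x) * fL x := hup
      _ = fL x * x := by ring
  -- tail of S is negligible wrt density of L
  have hTSfL : Tendsto (fun x => TS (x/2) / fL x) atTop (𝓝 0) := by
    set K : ℝ := (C * 2 ^ (γ-ε)) / (δ' * c) with hKdef
    have hKpos : 0 < K := by
      have h2p : (0:ℝ) < 2 ^ (γ-ε) := Real.rpow_pos_of_pos two_pos _
      rw [hKdef]; positivity
    have hhalf : Tendsto (fun x : ℝ => x/2) atTop atTop :=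
      tendsto_id.atTop_div_const (by norm_num)
    have hbound : ∀ᶠ x in atTop, TS (x/2) / fL x ≤ K * x ^ (-(2*ε)) := by
      filter_upwards [hhalf.eventually hTSup, hTlow, hfLlow,
        eventually_ge_atTop (max x₀ 1)] with x h1 h2 h3 hx
      have hx₀x : x₀ ≤ x := le_trans (le_max_left _ _) hx
      have hx1 : (1:ℝ) ≤ x := le_trans (le_max_right _ _) hx
      have hxpos : (0:ℝ) < x := lt_of_lt_of_le one_pos hx1
      have hfLx : 0 < fL x := hfLpos x hx₀x
      have hden : δ' * (c * x ^ (-(β+ε))) / x ≤ fL x := by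
        refine le_trans ?_ h3
        exact div_le_div_of_nonneg_right (mul_le_mul_of_nonneg_left h2 hδ'.le) hxpos.le
          |>.trans_eq rfl
      have hdenpos : 0 < δ' * (c * x ^ (-(β+ε))) / x := by
        have : (0:ℝ) < x ^ (-(β+ε)) := Real.rpow_pos_of_pos hxpos _
        positivity
      have hnum : TS (x/2) ≤ C * 2 ^ (γ-ε) * x ^ (-(γ-ε)) := by
        refine h1.trans (le_of_eq ?_)
        have : (x/2) ^ (-(γ-ε)) = x ^ (-(γ-ε)) * 2 ^ (γ-ε) := by
          rw [Real.div_rpow hxpos.le (by norm_num : (0:ℝ) ≤ 2),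
            Real.rpow_neg (by norm_num : (0:ℝ) ≤ 2)]
          field_simp
        rw [this]; ring
      have hBpos : (0:ℝ) < x ^ (-(β+ε)) := Real.rpow_pos_of_pos hxpos _
      have hApos : (0:ℝ) < x ^ (-(γ-ε)) := Real.rpow_pos_of_pos hxpos _
      have hkey : x ^ (-(γ-ε)) * x / x ^ (-(β+ε)) = x ^ (-(2*ε)) := by
        have e1 : (x ^ (-(β+ε)))⁻¹ = x ^ (β+ε) := by
          rw [← Real.rpow_neg hxpos.le, neg_neg]
        have e2 : x ^ (-(γ-ε)) * x * x ^ (β+ε)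
            = x ^ (-(γ-ε)) * x ^ (1:ℝ) * x ^ (β+ε) := by rw [Real.rpow_one]
        rw [div_eq_mul_inv, e1, e2, ← Real.rpow_add hxpos, ← Real.rpow_add hxpos]
        congr 1
        rw [hεdef]; ring
      calc TS (x/2) / fL x ≤ (C * 2 ^ (γ-ε) * x ^ (-(γ-ε))) / (δ' * (c * x ^ (-(β+ε))) / x) :=
            div_le_div₀ (by positivity) hnum hdenpos hden
        _ = (C * 2 ^ (γ-ε) / (δ' * c)) * (x ^ (-(γ-ε)) * x / x ^ (-(β+ε))) := by
            field_simp
        _ = K * x ^ (-(2*ε)) := by rw [hkey, hKdef]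
    have hzero : Tendsto (fun x : ℝ => K * x ^ (-(2*ε))) atTop (𝓝 0) := by
      have := (tendsto_rpow_neg_atTop (by linarith : (0:ℝ) < 2*ε)).const_mul K
      simpa using this
    refine squeeze_zero' ?_ hbound hzero
    filter_upwards [eventually_ge_atTop x₀] with x hx
    exact div_nonneg (hTS0 _) (hfLpos x hx).le
  -- uniform ratio bound for the density
  have hDten : Tendsto (fun x => (T x - T (2*x)) / T x) atTop (𝓝 (1 - 2 ^ (-β))) := by
    have h1 := hRVL 2 two_pos
    have h2 : Tendsto (fun x => 1 - T (2*x)/T x) atTop (𝓝 (1 - 2 ^ (-β))) :=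
      tendsto_const_nhds.sub h1
    refine h2.congr' ?_
    filter_upwards [hTpos] with x hx
    rw [sub_div, div_self hx.ne']
  have hd0 : (0:ℝ) < 1 - 2 ^ (-β) := by linarith
  obtain ⟨Cr, hCr1, hCrev⟩ : ∃ Cr : ℝ, 1 ≤ Cr ∧ ∀ᶠ x in atTop, fL (x/2) ≤ Cr * fL x := by
    set V : ℝ := ((1:ℝ)/4) ^ (-β) - ((1:ℝ)/2) ^ (-β) with hVdef
    have hV0 : 0 ≤ V := by
      rw [hVdef, sub_nonneg]
      exact Real.rpow_le_rpow_of_nonpos (by norm_num) (by norm_num) (by linarith)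
    have hNten : Tendsto (fun x => (T (x/4) - T (x/2)) / T x) atTop (𝓝 V) := by
      have h1 := (hRVL (1/4) (by norm_num)).sub (hRVL (1/2) (by norm_num))
      rw [← hVdef] at h1
      refine h1.congr fun x => ?_
      rw [← sub_div]
      congr 2 <;> ring
    have hQten : Tendsto (fun x => (T (x/4) - T (x/2)) / (T x - T (2*x))) atTop
        (𝓝 (V / (1 - 2 ^ (-β)))) := by
      have h := hNten.div hDten hd0.ne'
      refine h.congr' ?_
      filter_upwards [hTpos] with x hx
      exact ddd _ _ _ hx.ne'
    set K : ℝ := V / (1 - 2 ^ (-β)) with hKdef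
    have hK0 : 0 ≤ K := div_nonneg hV0 hd0.le
    refine ⟨4*K + 1, by linarith, ?_⟩
    have hevQ : ∀ᶠ x in atTop, (T (x/4) - T (x/2)) / (T x - T (2*x)) < K + 1/4 :=
      hQten.eventually (eventually_lt_nhds (by linarith))
    have hevD : ∀ᶠ x in atTop, (1 - (2:ℝ) ^ (-β))/2 * T x < T x - T (2*x) := by
      have h := hDten.eventually (eventually_gt_nhds
        (show (1 - (2:ℝ) ^ (-β))/2 < 1 - 2 ^ (-β) by linarith))
      filter_upwards [h, hTpos] with x h hx
      rwa [lt_div_iff₀ hx] at h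
    filter_upwards [hevQ, hevD, hTpos, eventually_ge_atTop (max (4*x₀) 1)] with x hQ hD hTx hx
    have hx1 : (1:ℝ) ≤ x := le_trans (le_max_right _ _) hx
    have hxpos : (0:ℝ) < x := by linarith
    have hx4 : x₀ ≤ x/4 := by
      have := le_trans (le_max_left _ _) hx; linarith
    have hx2 : x₀ ≤ x/2 := by linarith
    have hx0x : x₀ ≤ x := by linarith
    have hDpos : 0 < T x - T (2*x) := lt_trans (by positivity) hD
    -- window bounds
    have hup : T x - T (2*x) ≤ (2*x - x) * fL x := by
      rw [← hTdiff]; exact hwin_up x (2*x) hx0x (by linarith)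
    have hlo : (x/2 - x/4) * fL (x/2) ≤ T (x/4) - T (x/2) := by
      rw [← hTdiff]; exact hwin_lo (x/4) (x/2) hx4 (by linarith)
    have hfLx : 0 < fL x := hfLpos x hx0x
    have hNnn : 0 ≤ T (x/4) - T (x/2) := sub_nonneg.mpr (hTanti (by linarith))
    -- combine
    have h1 : fL (x/2) ≤ (T (x/4) - T (x/2)) / (x/4) := by
      rw [le_div_iff₀ (by linarith)]
      calc fL (x/2) * (x/4) = (x/2 - x/4) * fL (x/2) := by ring
        _ ≤ _ := hlo
    have h2 : (T x - T (2*x)) / x ≤ fL x := by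
      rw [div_le_iff₀ hxpos]
      calc T x - T (2*x) ≤ (2*x - x) * fL x := hup
        _ = fL x * x := by ring
    have hQ' : T (x/4) - T (x/2) ≤ (K + 1/4) * (T x - T (2*x)) := by
      rw [div_lt_iff₀ hDpos] at hQ
      linarith
    calc fL (x/2) ≤ (T (x/4) - T (x/2)) / (x/4) := h1
      _ = 4 * (T (x/4) - T (x/2)) / x := by
          field_simp
      _ ≤ 4 * ((K + 1/4) * (T x - T (2*x))) / x :=
          div_le_div_of_nonneg_right (by linarith) hxpos.le
      _ = (4*K + 1) * ((T x - T (2*x)) / x) := by ring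
      _ ≤ (4*K + 1) * fL x := mul_le_mul_of_nonneg_left h2 (by linarith)
  -- pointwise ratio limit (monotone density theorem, local form)
  have hratio : ∀ s : ℝ, 0 ≤ s → Tendsto (fun x => fL (x - s) / fL x) atTop (𝓝 1) := by
    intro s hs
    rw [tendsto_order]
    constructor
    · intro a ha
      filter_upwards [eventually_ge_atTop (x₀ + s)] with x hx
      have hx0 : x₀ ≤ x - s := by linarith
      have hfLx : 0 < fL x := hfLpos x (by linarith)
      have h1 : fL x ≤ fL (x - s) := hfLmono (x - s) x hx0 (by linarith)
      have : (1:ℝ) ≤ fL (x - s) / fL x := (one_le_div hfLx).mpr h1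
      linarith
    · intro b hb
      -- choose ε from the Rlim limit
      have hRl := tendsto_Rlim hβ
      have hev : ∀ᶠ e in 𝓝[>] (0:ℝ),
          ((1 - 2*e) ^ (-β) - (1 - e) ^ (-β)) / (1 - (1 + e) ^ (-β)) < b :=
        hRl.eventually (eventually_lt_nhds hb)
      have hev2 : ∀ᶠ e in 𝓝[>] (0:ℝ), e < 1/4 := by
        have : ∀ᶠ e in 𝓝 (0:ℝ), e < 1/4 := eventually_lt_nhds (by norm_num)
        exact this.filter_mono nhdsWithin_le_nhds
      obtain ⟨e, he1, he2, he0⟩ :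
          ∃ e : ℝ, ((1 - 2*e) ^ (-β) - (1 - e) ^ (-β)) / (1 - (1 + e) ^ (-β)) < b ∧
            e < 1/4 ∧ 0 < e := by
        obtain ⟨e, h1, h2, h3⟩ := (hev.and (hev2.and self_mem_nhdsWithin)).exists
        exact ⟨e, h1, h2, h3⟩
      set nlim : ℝ := (1 - 2*e) ^ (-β) - (1 - e) ^ (-β) with hnlim
      set dlim : ℝ := 1 - (1 + e) ^ (-β) with hdlim
      have hdlimpos : 0 < dlim := by
        rw [hdlim, sub_pos]
        exact Real.rpow_lt_one_of_one_lt_of_neg (by linarith) (by linarith)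
      -- limits of the T-windows
      have hNten : Tendsto (fun x => (T ((1-2*e)*x) - T ((1-e)*x)) / T x) atTop (𝓝 nlim) := by
        have h1 := (hRVL (1-2*e) (by linarith)).sub (hRVL (1-e) (by linarith))
        rw [← hnlim] at h1
        refine h1.congr fun x => ?_
        rw [← sub_div]
      have hDten2 : Tendsto (fun x => (T x - T ((1+e)*x)) / T x) atTop (𝓝 dlim) := by
        have h1 := hRVL (1+e) (by linarith)
        have h2 : Tendsto (fun x => 1 - T ((1+e)*x)/T x) atTop (𝓝 dlim) :=
          tendsto_const_nhds.sub h1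
        refine h2.congr' ?_
        filter_upwards [hTpos] with x hx
        rw [sub_div, div_self hx.ne']
      have hQten : Tendsto (fun x => (T ((1-2*e)*x) - T ((1-e)*x)) / (T x - T ((1+e)*x)))
          atTop (𝓝 (nlim / dlim)) := by
        have h := hNten.div hDten2 hdlimpos.ne'
        refine h.congr' ?_
        filter_upwards [hTpos] with x hx
        exact ddd _ _ _ hx.ne'
      have hevQ : ∀ᶠ x in atTop,
          (T ((1-2*e)*x) - T ((1-e)*x)) / (T x - T ((1+e)*x)) < b :=
        hQten.eventually (eventually_lt_nhds he1)
      have hevD : ∀ᶠ x in atTop, dlim/2 * T x < T x - T ((1+e)*x) := by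
        have h := hDten2.eventually (eventually_gt_nhds (by linarith : dlim/2 < dlim))
        filter_upwards [h, hTpos] with x h hx
        rwa [lt_div_iff₀ hx] at h
      filter_upwards [hevQ, hevD, hTpos,
        eventually_ge_atTop (max (s/e + 1) (max (2*x₀/(1-2*e)) 1))] with x hQ hD hTx hx
      have hx1 : (1:ℝ) ≤ x := le_trans (le_trans (le_max_right _ _) (le_max_right _ _)) hx
      have hxpos : (0:ℝ) < x := by linarith
      have hse : s ≤ e * x := by
        have h1 : s/e + 1 ≤ x := le_trans (le_max_left _ _) hx
        have h2 : s/e ≤ x - 1 := by linarith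
        rw [div_le_iff₀ he0] at h2
        nlinarith
      have h2e : 2*x₀/(1-2*e) ≤ x := le_trans (le_trans (le_max_left _ _) (le_max_right _ _)) hx
      have h12e : (0:ℝ) < 1 - 2*e := by linarith
      have hx02e : x₀ ≤ (1-2*e)*x := by
        rw [div_le_iff₀ h12e] at h2e
        nlinarith [hx₀]
      have hx0e : x₀ ≤ (1-e)*x := le_trans hx02e (by nlinarith)
      have hx0x : x₀ ≤ x := le_trans hx0e (by nlinarith)
      have hfLx : 0 < fL x := hfLpos x hx0x
      have hDpos : 0 < T x - T ((1+e)*x) := lt_trans (by positivity) hD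
      -- window bounds
      have hupwin : T x - T ((1+e)*x) ≤ ((1+e)*x - x) * fL x := by
        rw [← hTdiff]; exact hwin_up x ((1+e)*x) hx0x (by nlinarith)
      have hlowin : ((1-e)*x - (1-2*e)*x) * fL ((1-e)*x) ≤ T ((1-2*e)*x) - T ((1-e)*x) := by
        rw [← hTdiff]; exact hwin_lo ((1-2*e)*x) ((1-e)*x) hx02e (by nlinarith)
      have hex : (0:ℝ) < e * x := by positivity
      have hb1 : fL (x - s) ≤ fL ((1-e)*x) := hfLmono ((1-e)*x) (x - s) hx0e (by nlinarith)
      have hb2 : fL ((1-e)*x) ≤ (T ((1-2*e)*x) - T ((1-e)*x)) / (e*x) := by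
        rw [le_div_iff₀ hex]
        calc fL ((1-e)*x) * (e*x) = ((1-e)*x - (1-2*e)*x) * fL ((1-e)*x) := by ring
          _ ≤ _ := hlowin
      have hb3 : (T x - T ((1+e)*x)) / (e*x) ≤ fL x := by
        rw [div_le_iff₀ hex]
        calc T x - T ((1+e)*x) ≤ ((1+e)*x - x) * fL x := hupwin
          _ = fL x * (e*x) := by ring
      have hb3pos : 0 < (T x - T ((1+e)*x)) / (e*x) := by positivity
      have hNnn : 0 ≤ (T ((1-2*e)*x) - T ((1-e)*x)) / (e*x) :=
        div_nonneg (sub_nonneg.mpr (hTanti (by nlinarith))) hex.le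
      have := div_le_div₀ hNnn (hb1.trans hb2) hb3pos hb3
      rw [ddd _ _ _ hex.ne'] at this
      exact lt_of_le_of_lt this hQ
  -- pointwise limit of the normalized increment
  have hpt : ∀ s : ℝ, 0 ≤ s → Tendsto (fun x => (G x - G (x - s)) / fL x) atTop (𝓝 s) := by
    intro s hs
    have hup : Tendsto (fun x => s * (fL (x-s) / fL x)) atTop (𝓝 s) := by
      have := (hratio s hs).const_mul s
      simpa using this
    refine tendsto_of_tendsto_of_tendsto_of_le_of_le' tendsto_const_nhds hup ?_ ?_
    · filter_upwards [eventually_ge_atTop (x₀ + s)] with x hx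
      have hx0 : x₀ ≤ x - s := by linarith
      have hfLx : 0 < fL x := hfLpos x (by linarith)
      have h := hwin_lo (x-s) x hx0 (by linarith)
      rw [le_div_iff₀ hfLx]
      calc s * fL x = (x - (x-s)) * fL x := by ring
        _ ≤ G x - G (x-s) := h
    · filter_upwards [eventually_ge_atTop (x₀ + s)] with x hx
      have hx0 : x₀ ≤ x - s := by linarith
      have hfLx : 0 < fL x := hfLpos x (by linarith)
      have h := hwin_up (x-s) x hx0 (by linarith)
      rw [show s * (fL (x-s) / fL x) = (s * fL (x-s)) / fL x by ring]
      refine div_le_div_of_nonneg_right ?_ hfLx.le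
      calc G x - G (x-s) ≤ (x - (x-s)) * fL (x-s) := h
        _ = s * fL (x-s) := by ring
  -- measurability of G
  have hGmeas : Measurable G := hGmono.measurable
  have hmeasF : ∀ x : ℝ, Measurable (fun s => (G x - G (x - s)) / fL x) := fun x =>
    (measurable_const.sub (hGmeas.comp (measurable_const.sub measurable_id))).div_const _
  -- integrability of S
  have hεγ : (1:ℝ) < γ - ε := by
    have h : ε = (γ - β - 1)/4 := hεdef
    linarith
  have hSint : Integrable S P := by
    obtain ⟨M, hM⟩ := hTSup.exists_forall_of_atTop
    refine integrable_of_tail P hS hSpos (C := C) (M := max M 1) hεγ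
      (lt_of_lt_of_le one_pos (le_max_right _ _)) ?_
    intro t ht
    exact hM t (le_trans (le_max_left _ _) ht)
  have hid_int : Integrable (fun s : ℝ => s) ν := by
    rw [hν]
    exact (integrable_map_measure aestronglyMeasurable_id hS.aemeasurable).mpr hSint
  have hae : ∀ᵐ s ∂ν, 0 ≤ s := by
    rw [hν]
    exact (ae_map_iff hS.aemeasurable measurableSet_Ici).mpr (ae_of_all _ hSpos)
  have hνIoi : ∀ y : ℝ, (ν (Set.Ioi y)).toReal = TS y := by
    intro y
    rw [hν, Measure.map_apply hS measurableSet_Ioi]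
    rfl
  -- the two pieces
  set F1 : ℝ → ℝ → ℝ :=
    fun x => Set.indicator (Set.Iic (x/2)) (fun s => (G x - G (x - s)) / fL x) with hF1
  set F2 : ℝ → ℝ → ℝ :=
    fun x => Set.indicator (Set.Ioi (x/2)) (fun s => (G x - G (x - s)) / fL x) with hF2
  have hGabs : ∀ x s : ℝ, |G x - G (x - s)| ≤ 1 := by
    intro x s
    rw [abs_le]
    constructor
    · have := hG0 x; have := hG1 (x - s); linarith
    · have := hG1 x; have := hG0 (x - s); linarith
  have habs_le : ∀ x s : ℝ, |(G x - G (x - s)) / fL x| ≤ |1 / fL x| := by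
    intro x s
    rw [abs_div, abs_div, abs_one]
    exact div_le_div_of_nonneg_right (hGabs x s) (abs_nonneg _)
  have hF1int : ∀ x : ℝ, Integrable (F1 x) ν := by
    intro x
    refine (integrable_const (|1 / fL x|)).mono'
      (((hmeasF x).indicator measurableSet_Iic).aestronglyMeasurable) (ae_of_all _ fun s => ?_)
    simp only [hF1]
    refine le_trans (norm_indicator_le_norm_self _ _) ?_
    rw [Real.norm_eq_abs]
    exact habs_le x s
  have hF2int : ∀ x : ℝ, Integrable (F2 x) ν := by
    intro x
    refine (integrable_const (|1 / fL x|)).mono'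
      (((hmeasF x).indicator measurableSet_Ioi).aestronglyMeasurable) (ae_of_all _ fun s => ?_)
    simp only [hF2]
    refine le_trans (norm_indicator_le_norm_self _ _) ?_
    rw [Real.norm_eq_abs]
    exact habs_le x s
  have hsum : ∀ x s : ℝ, F1 x s + F2 x s = (G x - G (x - s)) / fL x := by
    intro x s
    simp only [hF1, hF2]
    by_cases h : s ≤ x/2
    · rw [Set.indicator_of_mem (by simpa using h),
        Set.indicator_of_notMem (by simpa using h : ¬ s ∈ Set.Ioi (x/2))]
      ring
    · rw [Set.indicator_of_notMem (by simpa using h : ¬ s ∈ Set.Iic (x/2)),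
        Set.indicator_of_mem (by simpa using not_le.mp h)]
      ring
  -- dominated convergence for the main piece
  have hI1 : Tendsto (fun x => ∫ s, F1 x s ∂ν) atTop (𝓝 (∫ s : ℝ, s ∂ν)) := by
    refine tendsto_integral_filter_of_dominated_convergence (fun s => Cr * |s|)
      (Eventually.of_forall fun x =>
        ((hmeasF x).indicator measurableSet_Iic).aestronglyMeasurable) ?_
      ((hid_int.abs.const_mul Cr)) ?_
    · filter_upwards [hCrev, eventually_ge_atTop (2*x₀ + 1)] with x hCrx hx
      refine hae.mono fun s hs => ?_
      have hfLx : 0 < fL x := hfLpos x (by linarith)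
      by_cases hmem : s ≤ x/2
      · simp only [hF1]
        rw [Set.indicator_of_mem (by simpa using hmem)]
        have hx0 : x₀ ≤ x - s := by linarith
        have hG_le : G x - G (x - s) ≤ s * fL (x - s) := by
          have h := hwin_up (x-s) x hx0 (by linarith)
          calc G x - G (x-s) ≤ (x - (x-s)) * fL (x-s) := h
            _ = s * fL (x-s) := by ring
        have hfLr : fL (x - s) ≤ fL (x/2) := hfLmono (x/2) (x-s) (by linarith) (by linarith)
        have hGnn : 0 ≤ G x - G (x - s) := sub_nonneg.mpr (hGmono (by linarith))
        rw [Real.norm_eq_abs, abs_of_nonneg (div_nonneg hGnn hfLx.le), div_le_iff₀ hfLx,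
          abs_of_nonneg hs]
        calc G x - G (x - s) ≤ s * fL (x - s) := hG_le
          _ ≤ s * fL (x/2) := mul_le_mul_of_nonneg_left hfLr hs
          _ ≤ s * (Cr * fL x) := mul_le_mul_of_nonneg_left hCrx hs
          _ = Cr * s * fL x := by ring
      · simp only [hF1]
        rw [Set.indicator_of_notMem (by simpa using hmem : ¬ s ∈ Set.Iic (x/2))]
        simp only [norm_zero]
        positivity
    · refine hae.mono fun s hs => ?_
      refine Tendsto.congr' ?_ (hpt s hs)
      filter_upwards [eventually_ge_atTop (2*s)] with x hx
      simp only [hF1]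
      rw [Set.indicator_of_mem (by simp only [Set.mem_Iic]; linarith)]
  -- the remainder piece
  have hI2 : Tendsto (fun x => ∫ s, F2 x s ∂ν) atTop (𝓝 0) := by
    refine squeeze_zero_norm' ?_ hTSfL
    filter_upwards [eventually_ge_atTop (max x₀ 1)] with x hx
    have hfLx : 0 < fL x := hfLpos x (le_trans (le_max_left _ _) hx)
    have hb : ∀ s, ‖F2 x s‖ ≤ Set.indicator (Set.Ioi (x/2)) (fun _ => 1/fL x) s := by
      intro s
      by_cases h : s ∈ Set.Ioi (x/2)
      · simp only [hF2]
        rw [Set.indicator_of_mem h, Set.indicator_of_mem h, Real.norm_eq_abs]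
        refine le_trans (habs_le x s) ?_
        rw [abs_of_nonneg (by positivity : (0:ℝ) ≤ 1 / fL x)]
      · simp only [hF2]
        rw [Set.indicator_of_notMem h, Set.indicator_of_notMem h]
        simp
    calc ‖∫ s, F2 x s ∂ν‖ ≤ ∫ s, Set.indicator (Set.Ioi (x/2)) (fun _ => 1/fL x) s ∂ν :=
        norm_integral_le_of_norm_le ((integrable_const _).indicator measurableSet_Ioi)
          (ae_of_all _ hb)
      _ = TS (x/2) / fL x := by
        rw [integral_indicator_const _ measurableSet_Ioi, measureReal_def, hνIoi, smul_eq_mul]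
        ring
  -- combine
  have hIfull : Tendsto (fun x => ∫ s, (G x - G (x - s)) / fL x ∂ν) atTop
      (𝓝 (∫ s : ℝ, s ∂ν)) := by
    have h := hI1.add hI2
    rw [add_zero] at h
    refine h.congr fun x => ?_
    rw [← integral_add (hF1int x) (hF2int x)]
    exact integral_congr_ae (ae_of_all _ fun s => hsum x s)
  have hSmean : ∫ s : ℝ, s ∂ν = ∫ ω, S ω ∂P := by
    rw [hν]
    exact integral_map hS.aemeasurable aestronglyMeasurable_id
  have hfinal := hIfull.neg
  rw [hSmean] at hfinal
  refine Tendsto.congr' ?_ hfinal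
  filter_upwards [eventually_ge_atTop x₀] with x hx
  have hGint : Integrable (fun s => G (x - s)) ν := by
    refine (integrable_const (1:ℝ)).mono'
      ((hGmeas.comp (measurable_const.sub measurable_id)).aestronglyMeasurable)
      (ae_of_all _ fun s => ?_)
    rw [Real.norm_eq_abs, abs_of_nonneg (hG0 _)]
    exact hG1 _
  have hconv : cdf' P (fun ω => L ω + S ω) x = ∫ s, G (x - s) ∂ν := by
    rw [hν]
    exact conv_repr P hL hS hindep x
  rw [hconv]
  have hsub : (∫ s, G (x-s) ∂ν) - G x = ∫ s, (G (x-s) - G x) ∂ν := by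
    rw [integral_sub hGint (integrable_const _)]
    congr 1
    simp [integral_const]
  have : (∫ s, G (x-s) ∂ν - G x) / fL x = ∫ s, (G (x-s) - G x) / fL x ∂ν := by
    rw [hsub, integral_div]
  rw [show cdf' P L = G from rfl] at *
  rw [this]
  rw [← integral_neg]
  refine integral_congr_ae (ae_of_all _ fun s => ?_)
  show -((G x - G (x - s)) / fL x) = (G (x - s) - G x) / fL x
  rw [← neg_div, neg_sub]
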